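/- Let T be a tree (a connected acyclic simple graph) and let f : ℤ → V(T) be an injective map with f(n) adjacent to f(n+1) in T for every n ∈ ℤ; let P denote the image of f. Suppose that every connected component of the subgraph of T induced on V(T) ∖ P is finite. Then for every vertex v of T there exists exactly one vertex x ∈ P such that either v = x, or the connected component of v in the subgraph of T induced on V(T) ∖ {x} is finite. -/

import Mathlib

open SimpleGraph


private lemma chain_reach {W : Type*} (G : SimpleGraph W) (g : ℕ → W)
    (h : ∀ i, G.Adj (g i) (g (i + 1))) : ∀ k, G.Reachable (g 0) (g k) := by
  intro k
  induction k with
  | zero => exact Reachable.refl _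
  | succ n ih => exact ih.trans (h n).reachable

private lemma seg_reach {V : Type*} (G : SimpleGraph V) (f : ℤ → V)
    (h : ∀ j : ℤ, G.Adj (f j) (f (j + 1))) (a b : ℤ) : G.Reachable (f a) (f b) := by
  wlog hab : a ≤ b generalizing a b
  · exact (this b a (le_of_not_ge hab)).symm
  have key := chain_reach G (fun i : ℕ => f (a + i)) (by
    intro i
    show G.Adj (f (a + (i : ℤ))) (f (a + ((i + 1 : ℕ) : ℤ)))
    have e : a + ((i + 1 : ℕ) : ℤ) = (a + i) + 1 := by push_cast; ring
    rw [e]; exact h _) (b - a).toNat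
  have e0 : a + ((0 : ℕ) : ℤ) = a := by simp
  have e1 : a + (((b - a).toNat : ℕ) : ℤ) = b := by omega
  simp only [e0, e1] at key
  exact key

private lemma side_infinite {V : Type*} (T : SimpleGraph V) (f : ℤ → V)
    (hinj : Function.Injective f) (hadj : ∀ n : ℤ, T.Adj (f n) (f (n + 1)))
    (n m : ℤ) (hmn : m ≠ n) (hm : f m ∈ {y : V | y ≠ f n}) :
    (((SimpleGraph.induce {y : V | y ≠ f n} T).connectedComponentMk ⟨f m, hm⟩).supp).Infinite := by
  rcases hmn.lt_or_gt with hlt | hlt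
  · -- m < n : go left
    set g : ℕ → {y : V | y ≠ f n} := fun i => ⟨f (n - 1 - i), hinj.ne (by omega)⟩ with hg
    have hadj' : ∀ i : ℕ, (SimpleGraph.induce {y : V | y ≠ f n} T).Adj (g i) (g (i + 1)) := by
      intro i
      show T.Adj (f (n - 1 - (i : ℤ))) (f (n - 1 - ((i + 1 : ℕ) : ℤ)))
      have e : (n - 1 - ((i + 1 : ℕ) : ℤ)) + 1 = n - 1 - (i : ℤ) := by push_cast; ring
      rw [← e]; exact (hadj _).symm
    have hreach := chain_reach _ g hadj'
    have hme : (⟨f m, hm⟩ : {y : V | y ≠ f n}) = g (n - 1 - m).toNat :=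
      Subtype.ext (congrArg f (by omega))
    apply Set.infinite_of_injective_forall_mem (f := g)
    · intro i j hij
      have := hinj (congrArg Subtype.val hij)
      omega
    · intro i
      rw [SimpleGraph.ConnectedComponent.mem_supp_iff, hme]
      exact SimpleGraph.ConnectedComponent.sound ((hreach i).symm.trans (hreach _))
  · -- n < m : go right
    set g : ℕ → {y : V | y ≠ f n} := fun i => ⟨f (n + 1 + i), hinj.ne (by omega)⟩ with hg
    have hadj' : ∀ i : ℕ, (SimpleGraph.induce {y : V | y ≠ f n} T).Adj (g i) (g (i + 1)) := by
      intro i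
      show T.Adj (f (n + 1 + (i : ℤ))) (f (n + 1 + ((i + 1 : ℕ) : ℤ)))
      have e : n + 1 + ((i + 1 : ℕ) : ℤ) = (n + 1 + (i : ℤ)) + 1 := by push_cast; ring
      rw [e]; exact hadj _
    have hreach := chain_reach _ g hadj'
    have hme : (⟨f m, hm⟩ : {y : V | y ≠ f n}) = g (m - n - 1).toNat :=
      Subtype.ext (congrArg f (by omega))
    apply Set.infinite_of_injective_forall_mem (f := g)
    · intro i j hij
      have := hinj (congrArg Subtype.val hij)
      omega
    · intro i
      rw [SimpleGraph.ConnectedComponent.mem_supp_iff, hme]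
      exact SimpleGraph.ConnectedComponent.sound ((hreach i).symm.trans (hreach _))


private lemma attach_exists {V : Type*} (T : SimpleGraph V) (f : ℤ → V) :
    ∀ {x y : V} (_ : T.Walk x y) (hx : x ∈ (Set.range f)ᶜ), y ∈ Set.range f →
      ∃ (u : V) (hu : u ∈ (Set.range f)ᶜ) (a : ℤ),
        (SimpleGraph.induce ((Set.range f)ᶜ) T).Reachable ⟨x, hx⟩ ⟨u, hu⟩ ∧ T.Adj u (f a) := by
  intro x y W
  induction W with
  | nil => intro hx hy; exact absurd hy hx
  | @cons p r q hpr W ih =>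
    intro hx hy
    by_cases hz : r ∈ Set.range f
    · obtain ⟨a, ha⟩ := hz
      exact ⟨p, hx, a, Reachable.refl _, ha ▸ hpr⟩
    · obtain ⟨u, hu, a, hre, hadj'⟩ := ih hz hy
      refine ⟨u, hu, a, ?_, hadj'⟩
      have : (SimpleGraph.induce ((Set.range f)ᶜ) T).Adj ⟨p, hx⟩ ⟨r, hz⟩ := hpr
      exact this.reachable.trans hre

private lemma attach_unique {V : Type*} (T : SimpleGraph V) (hT : T.IsTree)
    (f : ℤ → V) (hadj : ∀ n : ℤ, T.Adj (f n) (f (n + 1)))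
    (u₁ u₂ : V) (hu₁ : u₁ ∈ (Set.range f)ᶜ) (hu₂ : u₂ ∈ (Set.range f)ᶜ)
    (hre : (SimpleGraph.induce ((Set.range f)ᶜ) T).Reachable ⟨u₁, hu₁⟩ ⟨u₂, hu₂⟩)
    (a b : ℤ) (h₁ : T.Adj u₁ (f a)) (h₂ : T.Adj u₂ (f b)) : f a = f b := by
  by_contra hne
  have hbridge := (SimpleGraph.isAcyclic_iff_forall_adj_isBridge.mp hT.IsAcyclic) h₁
  rw [SimpleGraph.isBridge_iff] at hbridge
  set T' := T \ SimpleGraph.fromEdgeSet {s(u₁, f a)} with hT'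
  apply hbridge
  have hfa : f a ∈ Set.range f := ⟨a, rfl⟩
  have hmr : ∀ {x y : ↥((Set.range f)ᶜ)},
      (SimpleGraph.induce ((Set.range f)ᶜ) T).Adj x y → T'.Adj x.val y.val := by
    rintro ⟨x, hx⟩ ⟨y, hy⟩ hxy
    refine ⟨hxy, ?_⟩
    rw [SimpleGraph.fromEdgeSet_adj]
    rintro ⟨heq, -⟩
    rw [Set.mem_singleton_iff, Sym2.eq_iff] at heq
    rcases heq with ⟨h1, h2⟩ | ⟨h1, h2⟩
    · exact hy ⟨a, h2.symm⟩
    · exact hx ⟨a, h1.symm⟩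
  let φ : (SimpleGraph.induce ((Set.range f)ᶜ) T) →g T' := ⟨Subtype.val, hmr⟩
  have step1 : T'.Reachable u₁ u₂ := hre.map φ
  have step2 : T'.Adj u₂ (f b) := by
    refine ⟨h₂, ?_⟩
    rw [SimpleGraph.fromEdgeSet_adj]
    rintro ⟨heq, -⟩
    rw [Set.mem_singleton_iff, Sym2.eq_iff] at heq
    rcases heq with ⟨h1, h2⟩ | ⟨h1, h2⟩
    · exact hne h2.symm
    · exact hu₂ ⟨a, h1.symm⟩
  have step3 : T'.Reachable (f b) (f a) := by
    apply seg_reach T' f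
    intro j
    refine ⟨hadj j, ?_⟩
    rw [SimpleGraph.fromEdgeSet_adj]
    rintro ⟨heq, -⟩
    rw [Set.mem_singleton_iff, Sym2.eq_iff] at heq
    rcases heq with ⟨h1, h2⟩ | ⟨h1, h2⟩
    · exact hu₁ ⟨j, h1⟩
    · exact hu₁ ⟨j + 1, h2⟩
  exact step1.trans (step2.reachable.trans step3)

private lemma stays {V : Type*} (T : SimpleGraph V) (f : ℤ → V)
    (a : ℤ) (v : V) (hv : v ∈ (Set.range f)ᶜ)
    (huniq : ∀ (u : V) (hu : u ∈ (Set.range f)ᶜ),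
      (SimpleGraph.induce ((Set.range f)ᶜ) T).Reachable ⟨v, hv⟩ ⟨u, hu⟩ →
      ∀ b : ℤ, T.Adj u (f b) → f b = f a) :
    ∀ (p q : {y : V | y ≠ f a}) (_ : (SimpleGraph.induce {y : V | y ≠ f a} T).Walk p q)
      (hp : p.val ∈ (Set.range f)ᶜ),
      (SimpleGraph.induce ((Set.range f)ᶜ) T).Reachable ⟨v, hv⟩ ⟨p.val, hp⟩ →
      ∃ (hq : q.val ∈ (Set.range f)ᶜ),
        (SimpleGraph.induce ((Set.range f)ᶜ) T).Reachable ⟨v, hv⟩ ⟨q.val, hq⟩ := by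
  intro p q W
  induction W with
  | nil => intro hp hr; exact ⟨hp, hr⟩
  | @cons p r q hpr W ih =>
    intro hp hr
    by_cases hz : (r : V) ∈ Set.range f
    · obtain ⟨b, hb⟩ := hz
      have hadjb : T.Adj p.val (f b) := hb ▸ (hpr : T.Adj p.val r.val)
      have := huniq p.val hp hr b hadjb
      exact absurd (hb.symm.trans this) r.prop
    · have hadjc : (SimpleGraph.induce ((Set.range f)ᶜ) T).Adj ⟨p.val, hp⟩ ⟨r.val, hz⟩ :=
        (hpr : T.Adj p.val r.val)
      exact ih hz (hr.trans hadjc.reachable)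

/-- Let `T` be a tree and let `f : ℤ → V` be a bi-infinite path in `T`
(injective, with `f n` adjacent to `f (n+1)`), with image `P = Set.range f`.  Suppose
every connected component of the subgraph of `T` induced on the complement of `P` is
finite.  Then for every vertex `v` there is exactly one `x ∈ P` such that either `v = x`,
or the connected component of `v` in the subgraph induced on `V ∖ {x}` is finite. -/
theorem biinfinite_path_unique_separator
    {V : Type*} (T : SimpleGraph V) (hT : T.IsTree)
    (f : ℤ → V) (hinj : Function.Injective f)
    (hadj : ∀ n : ℤ, T.Adj (f n) (f (n + 1)))
    (hfin : ∀ c : (SimpleGraph.induce ((Set.range f)ᶜ) T).ConnectedComponent,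
      c.supp.Finite) :
    ∀ v : V, ∃! x : V, x ∈ Set.range f ∧
      (v = x ∨ ∃ h : v ∈ ({y : V | y ≠ x}),
        (((SimpleGraph.induce {y : V | y ≠ x} T).connectedComponentMk ⟨v, h⟩).supp).Finite) := by
  intro v
  by_cases hv : v ∈ Set.range f
  · obtain ⟨m, hm⟩ := hv
    subst hm
    refine ⟨f m, ⟨⟨m, rfl⟩, Or.inl rfl⟩, ?_⟩
    rintro x' ⟨⟨n, rfl⟩, hd⟩
    rcases hd with h | ⟨hne, hfin'⟩
    · exact h.symm
    · exfalso
      have hmn : m ≠ n := fun h => hne (congrArg f h)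
      exact (side_infinite T f hinj hadj n m hmn hne) hfin'
  · have hvc : v ∈ (Set.range f)ᶜ := hv
    obtain ⟨W⟩ := hT.isConnected.preconnected v (f 0)
    obtain ⟨u, hu, a, hru, hua⟩ := attach_exists T f W hvc ⟨0, rfl⟩
    have huniq : ∀ (u' : V) (hu' : u' ∈ (Set.range f)ᶜ),
        (SimpleGraph.induce ((Set.range f)ᶜ) T).Reachable ⟨v, hvc⟩ ⟨u', hu'⟩ →
        ∀ b : ℤ, T.Adj u' (f b) → f b = f a := by
      intro u' hu' hru' b hb
      exact attach_unique T hT f hadj u' u hu' hu (hru'.symm.trans hru) b a hb hua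
    have hva : v ∈ {y : V | y ≠ f a} := fun h => hv ⟨a, h.symm⟩
    have hfinA : (((SimpleGraph.induce {y : V | y ≠ f a} T).connectedComponentMk
        ⟨v, hva⟩).supp).Finite := by
      have himg : Subtype.val '' ((SimpleGraph.induce {y : V | y ≠ f a} T).connectedComponentMk
            ⟨v, hva⟩).supp ⊆
          Subtype.val '' ((SimpleGraph.induce ((Set.range f)ᶜ) T).connectedComponentMk
            ⟨v, hvc⟩).supp := by
        rintro w ⟨⟨w, hwa⟩, hwsupp, rfl⟩
        rw [SimpleGraph.ConnectedComponent.mem_supp_iff] at hwsupp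
        obtain ⟨W'⟩ := (SimpleGraph.ConnectedComponent.eq.mp hwsupp).symm
        obtain ⟨hq, hreq⟩ := stays T f a v hvc huniq ⟨v, hva⟩ ⟨w, hwa⟩ W' hvc (Reachable.refl _)
        exact ⟨⟨w, hq⟩, (SimpleGraph.ConnectedComponent.mem_supp_iff _ _).mpr
          (SimpleGraph.ConnectedComponent.sound hreq.symm), rfl⟩
      have hfin2 := ((hfin _).image Subtype.val).subset himg
      exact Set.Finite.of_finite_image hfin2 (Subtype.val_injective.injOn)
    refine ⟨f a, ⟨⟨a, rfl⟩, Or.inr ⟨hva, hfinA⟩⟩, ?_⟩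
    rintro x' ⟨⟨b, rfl⟩, hd⟩
    rcases hd with h | ⟨hvb, hfinB⟩
    · exact absurd ⟨b, h.symm⟩ hv
    · by_contra hne
      have hab : a ≠ b := fun h => hne (congrArg f h).symm
      have hfab : f a ∈ {y : V | y ≠ f b} := hinj.ne hab
      let ψ : (SimpleGraph.induce ((Set.range f)ᶜ) T) →g
          (SimpleGraph.induce {y : V | y ≠ f b} T) :=
        ⟨fun x => ⟨x.val, fun h => x.prop ⟨b, h.symm⟩⟩, fun {x y} h => h⟩
      have hr1 : (SimpleGraph.induce {y : V | y ≠ f b} T).Reachable ⟨v, hvb⟩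
          ⟨u, fun h => hu ⟨b, h.symm⟩⟩ := hru.map ψ
      have hr2 : (SimpleGraph.induce {y : V | y ≠ f b} T).Adj
          ⟨u, fun h => hu ⟨b, h.symm⟩⟩ ⟨f a, hfab⟩ := hua
      have hr3 := hr1.trans hr2.reachable
      have hinf := side_infinite T f hinj hadj b a hab hfab
      rw [SimpleGraph.ConnectedComponent.sound hr3.symm] at hinf
      exact hinf hfinB
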